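/- Let $q > 1$ be a real number and $r_V, r_W \ge 1$ integers. Suppose $a_i \sim c_V\, q^i i^{r_V - 1}$ and $b_i \sim c_W\, q^i i^{r_W-1}$ as $i \to \infty$, with $c_V, c_W > 0$. Then $\sum_{i=0}^{M} a_i b_{M-i} \sim \frac{c_V c_W (r_V-1)!(r_W-1)!}{(r_V + r_W - 1)!} q^M M^{r_V + r_W - 1}$ as $M \to \infty$. -/

import Mathlib

open Finset Filter

lemma hockey (k : ℕ) : ∀ m, ∑ i ∈ range m, i.choose k = m.choose (k+1)
  | 0 => by simp
  | m + 1 => by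
    rw [sum_range_succ, hockey k m, Nat.choose_succ_succ]
    simp only [Nat.succ_eq_add_one]
    omega

lemma vand (s : ℕ) : ∀ (t M : ℕ),
    ∑ i ∈ range (M+1), i.choose s * (M-i).choose t = (M+1).choose (s+t+1)
  | 0, M => by simpa using hockey s (M+1)
  | t + 1, 0 => by simp [Nat.choose_eq_zero_of_lt]
  | t + 1, M + 1 => by
    rw [sum_range_succ]
    have h1 : ∀ i ∈ range (M+1),
        i.choose s * (M+1-i).choose (t+1)
          = i.choose s * (M-i).choose (t+1) + i.choose s * (M-i).choose t := by
      intro i hi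
      have hi' : i ≤ M := by simpa [Nat.lt_succ_iff] using mem_range.mp hi
      have h2 : M + 1 - i = (M - i) + 1 := by omega
      rw [h2, Nat.choose_succ_succ]
      ring
    rw [sum_congr rfl h1, sum_add_distrib, vand s (t+1) M, vand s t M]
    have h3 : s + (t+1) + 1 = (s + t + 1) + 1 := by omega
    rw [h3, Nat.choose_succ_succ (M+1)]
    simp [Nat.succ_eq_add_one]
    omega

lemma df_lim (c k : ℕ) :
    Tendsto (fun M : ℕ => (((M+c).descFactorial k : ℕ) : ℝ) / (M:ℝ)^k) atTop (nhds 1) := by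
  have h1 : Tendsto (fun M : ℕ => ∏ j ∈ range k, (((M:ℝ) + c - j) / M)) atTop
      (nhds (∏ _j ∈ range k, (1:ℝ))) := by
    refine tendsto_finset_prod (range k) (fun j _ => ?_)
    have hd : Tendsto (fun M : ℕ => ((c:ℝ) - j) / M) atTop (nhds 0) :=
      Tendsto.div_atTop tendsto_const_nhds tendsto_natCast_atTop_atTop
    have h2 := (tendsto_const_nhds (x := (1:ℝ)) (f := atTop)).add hd
    rw [add_zero] at h2
    refine h2.congr' ?_
    filter_upwards [eventually_ge_atTop 1] with M hM
    have hM0 : (M:ℝ) ≠ 0 := by positivity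
    field_simp
    ring
  rw [prod_const_one] at h1
  refine h1.congr' ?_
  filter_upwards [eventually_ge_atTop k] with M hM
  have hcast : (((M+c).descFactorial k : ℕ) : ℝ) = ∏ j ∈ range k, ((M:ℝ) + c - j) := by
    rw [Nat.descFactorial_eq_prod_range, Nat.cast_prod]
    refine prod_congr rfl fun j hj => ?_
    have hj' : j < k := mem_range.mp hj
    have hjm : j ≤ M + c := by omega
    push_cast [Nat.cast_sub hjm]
    ring
  rw [hcast, prod_div_distrib, prod_const, card_range]

lemma ratio_lim (s t : ℕ) :
    Tendsto (fun M : ℕ => ((M:ℝ)+1)^(s+t) / (((M+1).choose (s+t+1) : ℕ) : ℝ))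
      atTop (nhds 0) := by
  have l1 : Tendsto (fun M : ℕ => (((M:ℝ)+1)/(M:ℝ))^(s+t)) atTop (nhds 1) := by
    have hb : Tendsto (fun M : ℕ => ((M:ℝ)+1)/(M:ℝ)) atTop (nhds 1) := by
      have hd : Tendsto (fun M : ℕ => (1:ℝ) / M) atTop (nhds 0) :=
        tendsto_one_div_atTop_nhds_zero_nat
      have h2 := (tendsto_const_nhds (x := (1:ℝ)) (f := atTop (α := ℕ))).add hd
      rw [add_zero] at h2
      refine h2.congr' ?_
      filter_upwards [eventually_ge_atTop 1] with M hM
      have : (M:ℝ) ≠ 0 := by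
        have : (1:ℝ) ≤ (M:ℝ) := by exact_mod_cast hM
        linarith
      field_simp
    simpa using hb.pow (s+t)
  have l2 : Tendsto (fun M : ℕ => ((M:ℝ))⁻¹) atTop (nhds 0) :=
    tendsto_inv_atTop_nhds_zero_nat
  have l3 : Tendsto (fun M : ℕ =>
      (M:ℝ)^(s+t+1) / (((M+1).descFactorial (s+t+1) : ℕ) : ℝ)) atTop (nhds 1) := by
    have h := (df_lim 1 (s+t+1)).inv₀ one_ne_zero
    rw [inv_one] at h
    refine h.congr fun M => ?_
    rw [inv_div]
  have hcomb := (((l1.mul l2).mul l3).mul_const (((s+t+1).factorial : ℕ) : ℝ))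
  simp only [one_mul, mul_one, zero_mul, mul_zero] at hcomb
  refine hcomb.congr' ?_
  filter_upwards [eventually_ge_atTop (s+t+1)] with M hM
  have hM1 : 1 ≤ M := by omega
  have hM0 : (M:ℝ) ≠ 0 := by
    have : (1:ℝ) ≤ (M:ℝ) := by exact_mod_cast hM1
    linarith
  have hdfc : (((M+1).descFactorial (s+t+1) : ℕ) : ℝ)
      = (((s+t+1).factorial : ℕ) : ℝ) * (((M+1).choose (s+t+1) : ℕ) : ℝ) := by
    rw [← Nat.cast_mul, Nat.descFactorial_eq_factorial_mul_choose]
  have hch : (0:ℝ) < (((M+1).choose (s+t+1) : ℕ) : ℝ) := by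
    exact_mod_cast Nat.choose_pos (by omega)
  have hfa : (0:ℝ) < (((s+t+1).factorial : ℕ) : ℝ) := by
    exact_mod_cast (s+t+1).factorial_pos
  rw [hdfc]
  field_simp
  rw [div_pow, pow_succ]
  field_simp

lemma conv_main (q : ℝ) (hq : 1 < q) (s t : ℕ)
    (cV cW : ℝ) (hcV : 0 < cV) (hcW : 0 < cW)
    (a b : ℕ → ℝ) (ha0 : ∀ i, 0 ≤ a i) (hb0 : ∀ i, 0 ≤ b i)
    (ha : Tendsto (fun i : ℕ => a i / (cV * (s.factorial:ℝ) * q ^ i * (i.choose s : ℝ)))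
      atTop (nhds 1))
    (hb : Tendsto (fun i : ℕ => b i / (cW * (t.factorial:ℝ) * q ^ i * (i.choose t : ℝ)))
      atTop (nhds 1))
    (hratio0 : Tendsto (fun M : ℕ => ((M:ℝ)+1)^(s+t) / (((M+1).choose (s+t+1) : ℕ) : ℝ))
      atTop (nhds 0)) :
    Tendsto (fun M : ℕ =>
        (∑ i ∈ range (M + 1), a i * b (M - i)) /
          (cV * cW * (s.factorial:ℝ) * (t.factorial:ℝ) * q ^ M *
            (((M+1).choose (s+t+1) : ℕ) : ℝ)))
      atTop (nhds 1) := by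
  have hq0 : (0:ℝ) < q := by linarith
  have hq1 : (1:ℝ) ≤ q := le_of_lt hq
  set A : ℕ → ℝ := fun i => cV * (s.factorial:ℝ) * q ^ i * (i.choose s : ℝ) with hA
  set B : ℕ → ℝ := fun i => cW * (t.factorial:ℝ) * q ^ i * (i.choose t : ℝ) with hB
  set c0 : ℝ := cV * cW * (s.factorial:ℝ) * (t.factorial:ℝ) with hc0
  have hc0pos : 0 < c0 := by positivity
  set γa : ℕ → ℝ := fun i => q ^ i * ((i:ℝ)+1)^s with hγa
  set γb : ℕ → ℝ := fun i => q ^ i * ((i:ℝ)+1)^t with hγb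
  have hicast : ∀ i : ℕ, (1:ℝ) ≤ (i:ℝ) + 1 := fun i => by
    have : (0:ℝ) ≤ (i:ℝ) := Nat.cast_nonneg i
    linarith
  have hγa1 : ∀ i, 1 ≤ γa i := fun i => by
    have h1 : (1:ℝ) ≤ q ^ i := one_le_pow₀ hq1
    have h2 : (1:ℝ) ≤ ((i:ℝ)+1)^s := one_le_pow₀ (hicast i)
    simp only [hγa]; nlinarith
  have hγb1 : ∀ i, 1 ≤ γb i := fun i => by
    have h1 : (1:ℝ) ≤ q ^ i := one_le_pow₀ hq1
    have h2 : (1:ℝ) ≤ ((i:ℝ)+1)^t := one_le_pow₀ (hicast i)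
    simp only [hγb]; nlinarith
  have hqi : ∀ i : ℕ, (0:ℝ) < q ^ i := fun i => pow_pos hq0 i
  have hA0 : ∀ i, 0 ≤ A i := fun i => by
    simp only [hA]
    have := (hqi i).le
    positivity
  have hB0 : ∀ i, 0 ≤ B i := fun i => by
    simp only [hB]
    have := (hqi i).le
    positivity
  have hAγ : ∀ i, A i ≤ cV * γa i := by
    intro i
    have h1 : ((s.factorial:ℝ) * (i.choose s : ℝ)) ≤ ((i:ℝ)+1)^s := by
      rw [← Nat.cast_mul, ← Nat.descFactorial_eq_factorial_mul_choose]
      calc ((i.descFactorial s : ℕ) : ℝ) ≤ ((i^s : ℕ) : ℝ) := by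
            exact_mod_cast Nat.descFactorial_le_pow i s
        _ = (i:ℝ)^s := by push_cast; ring
        _ ≤ ((i:ℝ)+1)^s := pow_le_pow_left₀ (Nat.cast_nonneg i) (by linarith) s
    calc A i = cV * q ^ i * ((s.factorial:ℝ) * (i.choose s : ℝ)) := by
          simp only [hA]; ring
      _ ≤ cV * q ^ i * (((i:ℝ)+1)^s) :=
          mul_le_mul_of_nonneg_left h1 (mul_nonneg hcV.le (hqi i).le)
      _ = cV * γa i := by simp only [hγa]; ring
  have hBγ : ∀ i, B i ≤ cW * γb i := by
    intro i
    have h1 : ((t.factorial:ℝ) * (i.choose t : ℝ)) ≤ ((i:ℝ)+1)^t := by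
      rw [← Nat.cast_mul, ← Nat.descFactorial_eq_factorial_mul_choose]
      calc ((i.descFactorial t : ℕ) : ℝ) ≤ ((i^t : ℕ) : ℝ) := by
            exact_mod_cast Nat.descFactorial_le_pow i t
        _ = (i:ℝ)^t := by push_cast; ring
        _ ≤ ((i:ℝ)+1)^t := pow_le_pow_left₀ (Nat.cast_nonneg i) (by linarith) t
    calc B i = cW * q ^ i * ((t.factorial:ℝ) * (i.choose t : ℝ)) := by
          simp only [hB]; ring
      _ ≤ cW * q ^ i * (((i:ℝ)+1)^t) :=
          mul_le_mul_of_nonneg_left h1 (mul_nonneg hcW.le (hqi i).le)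
      _ = cW * γb i := by simp only [hγb]; ring
  -- generic global bound extraction
  have hKgen : ∀ (c : ℝ), 0 < c → ∀ (f F γ : ℕ → ℝ), (∀ i, 0 ≤ f i) → (∀ i, 0 ≤ F i) →
      (∀ i, 1 ≤ γ i) → (∀ᶠ i in atTop, f i ≤ 2 * F i) → (∀ i, F i ≤ c * γ i) →
      ∃ Kf : ℝ, 0 < Kf ∧ ∀ i, f i ≤ Kf * γ i := by
    intro c hc f F γ hf0 hF0 hγ1 hev hFγ
    obtain ⟨N1, hN1⟩ := eventually_atTop.mp hev
    have hsum0 : 0 ≤ ∑ i ∈ range N1, f i := sum_nonneg fun j _ => hf0 j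
    refine ⟨2 * c + ∑ i ∈ range N1, f i, by positivity, fun i => ?_⟩
    by_cases h : i < N1
    · have h1 : f i ≤ ∑ i ∈ range N1, f i :=
        single_le_sum (fun j _ => hf0 j) (mem_range.mpr h)
      have h2 := hγ1 i
      nlinarith
    · push_neg at h
      have h3 := hN1 i h
      have h4 := hFγ i
      have h5 := hγ1 i
      have h6 := hF0 i
      nlinarith
  have heva : ∀ᶠ i in atTop, a i ≤ 2 * A i := by
    filter_upwards [Metric.tendsto_nhds.mp ha 1 one_pos, eventually_ge_atTop s] with i h1 h2
    have hApos : 0 < A i := by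
      have hch : (0:ℝ) < (i.choose s : ℝ) := by exact_mod_cast Nat.choose_pos h2
      have hf : (0:ℝ) < (s.factorial : ℝ) := by exact_mod_cast s.factorial_pos
      simp only [hA]
      have := hqi i
      positivity
    rw [Real.dist_eq] at h1
    have h4 : a i / A i < 2 := by have := abs_lt.mp h1; linarith [this.2]
    rw [div_lt_iff₀ hApos] at h4
    linarith
  have hevb : ∀ᶠ i in atTop, b i ≤ 2 * B i := by
    filter_upwards [Metric.tendsto_nhds.mp hb 1 one_pos, eventually_ge_atTop t] with i h1 h2
    have hBpos : 0 < B i := by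
      have hch : (0:ℝ) < (i.choose t : ℝ) := by exact_mod_cast Nat.choose_pos h2
      have hf : (0:ℝ) < (t.factorial : ℝ) := by exact_mod_cast t.factorial_pos
      simp only [hB]
      have := hqi i
      positivity
    rw [Real.dist_eq] at h1
    have h4 : b i / B i < 2 := by have := abs_lt.mp h1; linarith [this.2]
    rw [div_lt_iff₀ hBpos] at h4
    linarith
  obtain ⟨Ka, hKa0, hKa⟩ := hKgen cV hcV a A γa ha0 hA0 hγa1 heva hAγ
  obtain ⟨Kb, hKb0, hKb⟩ := hKgen cW hcW b B γb hb0 hB0 hγb1 hevb hBγ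
  set K : ℝ := Ka * Kb + cV * cW with hK
  have hKpos : 0 < K := by positivity
  -- global per-term bound
  have hglob : ∀ M : ℕ, ∀ i ∈ range (M+1),
      |a i * b (M-i) - A i * B (M-i)| ≤ K * (q^M * ((M:ℝ)+1)^(s+t)) := by
    intro M i hi
    have hiM : i ≤ M := by simpa [Nat.lt_succ_iff] using mem_range.mp hi
    have hγprod : γa i * γb (M-i) ≤ q^M * ((M:ℝ)+1)^(s+t) := by
      have hpow : q ^ i * q ^ (M-i) = q ^ M := by
        rw [← pow_add]; congr 1; omega
      have e1 : γa i * γb (M-i) = q^M * (((i:ℝ)+1)^s * (((M-i:ℕ):ℝ)+1)^t) := by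
        simp only [hγa, hγb]
        calc q ^ i * ((i:ℝ)+1)^s * (q ^ (M-i) * (((M-i:ℕ):ℝ)+1)^t)
            = (q ^ i * q ^ (M-i)) * (((i:ℝ)+1)^s * (((M-i:ℕ):ℝ)+1)^t) := by ring
          _ = q^M * (((i:ℝ)+1)^s * (((M-i:ℕ):ℝ)+1)^t) := by rw [hpow]
      rw [e1, pow_add]
      have e2 : ((i:ℝ)+1)^s ≤ ((M:ℝ)+1)^s := by
        apply pow_le_pow_left₀ (by positivity)
        have : (i:ℝ) ≤ M := by exact_mod_cast hiM
        linarith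
      have e3 : (((M-i:ℕ):ℝ)+1)^t ≤ ((M:ℝ)+1)^t := by
        apply pow_le_pow_left₀ (by positivity)
        have : ((M-i:ℕ):ℝ) ≤ M := by exact_mod_cast Nat.sub_le M i
        linarith
      exact mul_le_mul_of_nonneg_left
        (mul_le_mul e2 e3 (by positivity) (by positivity)) (hqi M).le
    have hγa0 : (0:ℝ) ≤ γa i := by linarith [hγa1 i]
    have hγb0 : (0:ℝ) ≤ γb (M-i) := by linarith [hγb1 (M-i)]
    have hab : a i * b (M-i) ≤ Ka * Kb * (γa i * γb (M-i)) := by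
      calc a i * b (M-i) ≤ (Ka * γa i) * (Kb * γb (M-i)) :=
            mul_le_mul (hKa i) (hKb (M-i)) (hb0 (M-i)) (mul_nonneg hKa0.le hγa0)
        _ = Ka * Kb * (γa i * γb (M-i)) := by ring
    have hAB : A i * B (M-i) ≤ cV * cW * (γa i * γb (M-i)) := by
      calc A i * B (M-i) ≤ (cV * γa i) * (cW * γb (M-i)) :=
            mul_le_mul (hAγ i) (hBγ (M-i)) (hB0 (M-i)) (mul_nonneg hcV.le hγa0)
        _ = cV * cW * (γa i * γb (M-i)) := by ring
    have hab0 : 0 ≤ a i * b (M-i) := mul_nonneg (ha0 i) (hb0 (M-i))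
    have hAB0 : 0 ≤ A i * B (M-i) := mul_nonneg (hA0 i) (hB0 (M-i))
    have hQ0 : (0:ℝ) ≤ q^M * ((M:ℝ)+1)^(s+t) := by
      have := (hqi M).le; positivity
    have hx : a i * b (M-i) ≤ K * (q^M * ((M:ℝ)+1)^(s+t)) := by
      have l1 : Ka*Kb*(γa i*γb (M-i)) ≤ Ka*Kb*(q^M * ((M:ℝ)+1)^(s+t)) :=
        mul_le_mul_of_nonneg_left hγprod (by positivity)
      have l2 : (0:ℝ) ≤ cV*cW*(q^M * ((M:ℝ)+1)^(s+t)) := by positivity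
      have l3 : K * (q^M * ((M:ℝ)+1)^(s+t)) =
          Ka*Kb*(q^M * ((M:ℝ)+1)^(s+t)) + cV*cW*(q^M * ((M:ℝ)+1)^(s+t)) := by
        rw [hK]; ring
      linarith
    have hy : A i * B (M-i) ≤ K * (q^M * ((M:ℝ)+1)^(s+t)) := by
      have l1 : cV*cW*(γa i*γb (M-i)) ≤ cV*cW*(q^M * ((M:ℝ)+1)^(s+t)) :=
        mul_le_mul_of_nonneg_left hγprod (by positivity)
      have l2 : (0:ℝ) ≤ Ka*Kb*(q^M * ((M:ℝ)+1)^(s+t)) := by positivity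
      have l3 : K * (q^M * ((M:ℝ)+1)^(s+t)) =
          Ka*Kb*(q^M * ((M:ℝ)+1)^(s+t)) + cV*cW*(q^M * ((M:ℝ)+1)^(s+t)) := by
        rw [hK]; ring
      linarith
    exact abs_le.mpr ⟨by linarith, by linarith⟩
  -- exact identity
  have hsum : ∀ M : ℕ, ∑ i ∈ range (M+1), A i * B (M-i)
      = c0 * q^M * (((M+1).choose (s+t+1) : ℕ) : ℝ) := by
    intro M
    have h1 : ∀ i ∈ range (M+1),
        A i * B (M-i) = c0 * q^M * ((i.choose s * (M-i).choose t : ℕ) : ℝ) := by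
      intro i hi
      have hiM : i ≤ M := by simpa [Nat.lt_succ_iff] using mem_range.mp hi
      have hpow : q ^ i * q ^ (M-i) = q ^ M := by
        rw [← pow_add]; congr 1; omega
      push_cast
      calc A i * B (M-i)
          = c0 * (q ^ i * q ^ (M-i)) * ((i.choose s : ℝ) * ((M-i).choose t : ℝ)) := by
            simp only [hA, hB, hc0]; ring
        _ = c0 * q^M * ((i.choose s : ℝ) * ((M-i).choose t : ℝ)) := by rw [hpow]
    rw [sum_congr rfl h1, ← mul_sum, ← Nat.cast_sum, vand s t M]
  have hCpos : ∀ M : ℕ, s + t ≤ M → (0:ℝ) < (((M+1).choose (s+t+1) : ℕ):ℝ) := by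
    intro M hM
    exact_mod_cast Nat.choose_pos (by omega)
  -- middle estimates
  have hmid : ∀ ε' : ℝ, 0 < ε' → ∃ N : ℕ, s ≤ N ∧ t ≤ N ∧ ∀ i, N ≤ i →
      |a i - A i| ≤ ε' * A i ∧ |b i - B i| ≤ ε' * B i := by
    intro ε' hε'
    obtain ⟨N1, hN1⟩ := eventually_atTop.mp
      (((Metric.tendsto_nhds.mp ha ε' hε').and (Metric.tendsto_nhds.mp hb ε' hε')).and
        (eventually_ge_atTop (max s t)))
    refine ⟨N1, ?_, ?_, fun i hi => ?_⟩
    · exact le_trans (le_max_left s t) (hN1 N1 le_rfl).2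
    · exact le_trans (le_max_right s t) (hN1 N1 le_rfl).2
    · obtain ⟨⟨h1, h2⟩, h3⟩ := hN1 i hi
      have hsi : s ≤ i := le_trans (le_max_left s t) h3
      have hti : t ≤ i := le_trans (le_max_right s t) h3
      have hApos : 0 < A i := by
        have hch : (0:ℝ) < (i.choose s : ℝ) := by exact_mod_cast Nat.choose_pos hsi
        have hf : (0:ℝ) < (s.factorial : ℝ) := by exact_mod_cast s.factorial_pos
        simp only [hA]; have := hqi i; positivity
      have hBpos : 0 < B i := by
        have hch : (0:ℝ) < (i.choose t : ℝ) := by exact_mod_cast Nat.choose_pos hti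
        have hf : (0:ℝ) < (t.factorial : ℝ) := by exact_mod_cast t.factorial_pos
        simp only [hB]; have := hqi i; positivity
      rw [Real.dist_eq] at h1 h2
      constructor
      · have e : a i - A i = (a i / A i - 1) * A i := by field_simp
        rw [e, abs_mul, abs_of_pos hApos]
        exact mul_le_mul_of_nonneg_right h1.le hApos.le
      · have e : b i - B i = (b i / B i - 1) * B i := by field_simp
        rw [e, abs_mul, abs_of_pos hBpos]
        exact mul_le_mul_of_nonneg_right h2.le hBpos.le
  -- main ε argument
  rw [Metric.tendsto_atTop]
  intro ε hε
  set ε' : ℝ := min (ε/5) 1 with hε'def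
  have hε'pos : 0 < ε' := lt_min (by linarith) one_pos
  have hε'le1 : ε' ≤ 1 := min_le_right _ _
  have hε'le : ε' ≤ ε/5 := min_le_left _ _
  obtain ⟨N, hNs, hNt, hN⟩ := hmid ε' hε'pos
  set δ : ℝ := ε' * c0 / (2*(N:ℝ)*K + 1) with hδdef
  have hNK : (0:ℝ) ≤ 2*(N:ℝ)*K := by positivity
  have hδpos : 0 < δ := by
    rw [hδdef]
    have : (0:ℝ) < 2*(N:ℝ)*K + 1 := by linarith
    positivity
  obtain ⟨N3, hN3⟩ := eventually_atTop.mp (Metric.tendsto_nhds.mp hratio0 δ hδpos)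
  refine ⟨max N3 (2*N + (s+t+1)), fun M hM => ?_⟩
  have hM3 : N3 ≤ M := le_trans (le_max_left _ _) hM
  have hM2 : 2*N + (s+t+1) ≤ M := le_trans (le_max_right _ _) hM
  have hC := hCpos M (by omega)
  have hQ := hqi M
  have hDpos : 0 < c0 * q^M * (((M+1).choose (s+t+1) : ℕ):ℝ) := by positivity
  -- per-term bound
  have hterm : ∀ i ∈ range (M+1),
      |a i * b (M-i) - A i * B (M-i)| ≤ 3*ε' * (A i * B (M-i)) +
        (if i < N ∨ M - i < N then K * (q^M*((M:ℝ)+1)^(s+t)) else 0) := by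
    intro i hi
    by_cases hcnd : i < N ∨ M - i < N
    · rw [if_pos hcnd]
      have h1 := hglob M i hi
      have h2 : 0 ≤ 3*ε' * (A i * B (M-i)) :=
        mul_nonneg (by linarith) (mul_nonneg (hA0 i) (hB0 (M-i)))
      linarith
    · rw [if_neg hcnd, add_zero]
      push_neg at hcnd
      obtain ⟨h1, h2⟩ := hcnd
      obtain ⟨haa, -⟩ := hN i h1
      obtain ⟨-, hbb⟩ := hN (M-i) h2
      have hA' := hA0 i
      have hB' := hB0 (M-i)
      have hb' := hb0 (M-i)
      have hbB : b (M-i) ≤ 2 * B (M-i) := by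
        have h3 := (abs_le.mp hbb).2
        have h4 : ε' * B (M-i) ≤ 1 * B (M-i) :=
          mul_le_mul_of_nonneg_right hε'le1 hB'
        linarith
      have e : a i * b (M-i) - A i * B (M-i)
          = (a i - A i) * b (M-i) + A i * (b (M-i) - B (M-i)) := by ring
      calc |a i * b (M-i) - A i * B (M-i)|
          ≤ |a i - A i| * b (M-i) + A i * |b (M-i) - B (M-i)| := by
            rw [e]
            refine (abs_add_le _ _).trans ?_
            rw [abs_mul, abs_mul, abs_of_nonneg hb', abs_of_nonneg hA']
        _ ≤ 3*ε' * (A i * B (M-i)) := by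
            have c1 : |a i - A i| * b (M-i) ≤ ε' * A i * b (M-i) :=
              mul_le_mul_of_nonneg_right haa hb'
            have c2 : ε' * A i * b (M-i) ≤ ε' * A i * (2 * B (M-i)) :=
              mul_le_mul_of_nonneg_left hbB (mul_nonneg hε'pos.le hA')
            have c3 : A i * |b (M-i) - B (M-i)| ≤ A i * (ε' * B (M-i)) :=
              mul_le_mul_of_nonneg_left hbb hA'
            have c4 : ε' * A i * (2 * B (M-i)) + A i * (ε' * B (M-i))
                = 3*ε' * (A i * B (M-i)) := by ring
            linarith
  -- sum bound
  have hsb : |(∑ i ∈ range (M+1), a i * b (M-i)) -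
      c0*q^M*(((M+1).choose (s+t+1) : ℕ):ℝ)| ≤
      3*ε' * (c0*q^M*(((M+1).choose (s+t+1) : ℕ):ℝ)) +
        2*(N:ℝ)*(K*(q^M*((M:ℝ)+1)^(s+t))) := by
    rw [← hsum M, ← sum_sub_distrib]
    refine (abs_sum_le_sum_abs _ _).trans ?_
    refine (sum_le_sum hterm).trans ?_
    rw [sum_add_distrib, ← mul_sum, hsum M]
    have hite : ∑ i ∈ range (M+1),
        (if i < N ∨ M - i < N then K * (q^M*((M:ℝ)+1)^(s+t)) else 0)
        ≤ 2*(N:ℝ)*(K*(q^M*((M:ℝ)+1)^(s+t))) := by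
      rw [← sum_filter]
      rw [sum_const, nsmul_eq_mul]
      have hcard : ((range (M+1)).filter (fun i => i < N ∨ M - i < N)).card ≤ 2*N := by
        have hsub : (range (M+1)).filter (fun i => i < N ∨ M - i < N)
            ⊆ range N ∪ Ico (M+1-N) (M+1) := by
          intro i hi
          simp only [mem_filter, mem_range, mem_union, mem_Ico] at *
          omega
        calc ((range (M+1)).filter _).card
            ≤ (range N ∪ Ico (M+1-N) (M+1)).card := card_le_card hsub
          _ ≤ N + ((M+1) - (M+1-N)) := by
              refine (card_union_le _ _).trans ?_
              rw [card_range, Nat.card_Ico]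
          _ ≤ 2*N := by omega
      have hconst : (0:ℝ) ≤ K * (q^M*((M:ℝ)+1)^(s+t)) := by positivity
      have : (((range (M+1)).filter (fun i => i < N ∨ M - i < N)).card : ℝ) ≤ 2*(N:ℝ) := by
        exact_mod_cast hcard
      exact mul_le_mul_of_nonneg_right this hconst
    linarith
  -- small term
  have hsm : 2*(N:ℝ)*(K*(q^M*((M:ℝ)+1)^(s+t))) ≤
      ε' * (c0*q^M*(((M+1).choose (s+t+1) : ℕ):ℝ)) := by
    have hr := hN3 M hM3
    rw [Real.dist_eq, sub_zero] at hr
    have hr2 : ((M:ℝ)+1)^(s+t) / (((M+1).choose (s+t+1) : ℕ):ℝ) < δ := lt_of_abs_lt hr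
    rw [div_lt_iff₀ hC] at hr2
    have h0 : (0:ℝ) < 2*(N:ℝ)*K + 1 := by linarith
    have hδc : (2*(N:ℝ)*K) * δ ≤ ε' * c0 := by
      calc (2*(N:ℝ)*K) * δ = (ε'*c0) * ((2*(N:ℝ)*K)/(2*(N:ℝ)*K + 1)) := by
            rw [hδdef]; ring
        _ ≤ (ε'*c0) * 1 := by
            refine mul_le_mul_of_nonneg_left ?_ (by positivity)
            rw [div_le_one h0]; linarith
        _ = ε'*c0 := mul_one _
    calc 2*(N:ℝ)*(K*(q^M*((M:ℝ)+1)^(s+t)))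
        = (2*(N:ℝ)*K*q^M) * (((M:ℝ)+1)^(s+t)) := by ring
      _ ≤ (2*(N:ℝ)*K*q^M) * (δ*(((M+1).choose (s+t+1) : ℕ):ℝ)) := by
          refine mul_le_mul_of_nonneg_left ?_ (by positivity)
          linarith
      _ = ((2*(N:ℝ)*K)*δ) * (q^M*(((M+1).choose (s+t+1) : ℕ):ℝ)) := by ring
      _ ≤ (ε'*c0) * (q^M*(((M+1).choose (s+t+1) : ℕ):ℝ)) := by
          refine mul_le_mul_of_nonneg_right hδc (by positivity)
      _ = ε' * (c0*q^M*(((M+1).choose (s+t+1) : ℕ):ℝ)) := by ring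
  -- finish
  set T : ℝ := ∑ i ∈ range (M+1), a i * b (M-i) with hT
  set D : ℝ := c0*q^M*(((M+1).choose (s+t+1) : ℕ):ℝ) with hD
  have hfin : |T - D| ≤ 4*ε' * D := by linarith
  rw [Real.dist_eq]
  have e : T / D - 1 = (T - D)/D := by field_simp
  rw [e, abs_div, abs_of_pos hDpos, div_lt_iff₀ hDpos]
  have l1 : 4*ε'*D ≤ (4*(ε/5))*D :=
    mul_le_mul_of_nonneg_right (by linarith) hDpos.le
  have l2 : (4*(ε/5))*D < ε*D :=
    mul_lt_mul_of_pos_right (by linarith) hDpos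
  linarith

/-- The convolution asymptotic behind Theorem 3.4: if `a_i ~ c_V q^i i^{r_V-1}` and
`b_i ~ c_W q^i i^{r_W-1}`, then
`∑_{i=0}^M a_i b_{M-i} ~ (c_V c_W (r_V-1)!(r_W-1)!/(r_V+r_W-1)!) q^M M^{r_V+r_W-1}`. -/
theorem stmt8 (q : ℝ) (hq : 1 < q) (rV rW : ℕ) (hrV : 1 ≤ rV) (hrW : 1 ≤ rW)
    (cV cW : ℝ) (hcV : 0 < cV) (hcW : 0 < cW)
    (a b : ℕ → ℝ) (ha0 : ∀ i, 0 ≤ a i) (hb0 : ∀ i, 0 ≤ b i)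
    (ha : Tendsto (fun i : ℕ => a i / (cV * q ^ i * (i : ℝ) ^ (rV - 1))) atTop (nhds 1))
    (hb : Tendsto (fun i : ℕ => b i / (cW * q ^ i * (i : ℝ) ^ (rW - 1))) atTop (nhds 1)) :
    Tendsto (fun M : ℕ =>
        (∑ i ∈ Finset.range (M + 1), a i * b (M - i)) /
          (cV * cW * ((rV - 1).factorial : ℝ) * ((rW - 1).factorial : ℝ) /
              ((rV + rW - 1).factorial : ℝ) * q ^ M * (M : ℝ) ^ (rV + rW - 1)))
      atTop (nhds 1) := by
  have hq0 : (0:ℝ) < q := by linarith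
  obtain ⟨s, rfl⟩ : ∃ s, rV = s + 1 := ⟨rV - 1, by omega⟩
  obtain ⟨t, rfl⟩ : ∃ t, rW = t + 1 := ⟨rW - 1, by omega⟩
  simp only [Nat.add_sub_cancel] at ha hb ⊢
  have hn : s + 1 + (t + 1) - 1 = s + t + 1 := by omega
  simp only [hn] at *
  -- convert hypotheses to binomial-normalized form
  have hconv : ∀ (c : ℝ), 0 < c → ∀ (f : ℕ → ℝ) (k : ℕ),
      Tendsto (fun i : ℕ => f i / (c * q ^ i * (i : ℝ) ^ k)) atTop (nhds 1) →
      Tendsto (fun i : ℕ => f i / (c * (k.factorial:ℝ) * q ^ i * (i.choose k : ℝ)))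
        atTop (nhds 1) := by
    intro c hc f k hf
    have hinv : Tendsto (fun i : ℕ => (i:ℝ)^k / ((i.descFactorial k : ℕ):ℝ))
        atTop (nhds 1) := by
      have h := (df_lim 0 k).inv₀ one_ne_zero
      rw [inv_one] at h
      refine h.congr fun i => ?_
      rw [inv_div, Nat.add_zero]
    have h2 := hf.mul hinv
    rw [mul_one] at h2
    refine h2.congr' ?_
    filter_upwards [eventually_ge_atTop (max k 1)] with i hi
    have hki : k ≤ i := le_trans (le_max_left _ _) hi
    have h1i : 1 ≤ i := le_trans (le_max_right _ _) hi
    have hi0 : (0:ℝ) < (i:ℝ) := by exact_mod_cast h1i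
    have hdfc : ((i.descFactorial k : ℕ) : ℝ)
        = ((k.factorial : ℕ) : ℝ) * ((i.choose k : ℕ) : ℝ) := by
      rw [← Nat.cast_mul, Nat.descFactorial_eq_factorial_mul_choose]
    have hch : (0:ℝ) < ((i.choose k : ℕ) : ℝ) := by exact_mod_cast Nat.choose_pos hki
    have hfa : (0:ℝ) < ((k.factorial : ℕ) : ℝ) := by exact_mod_cast k.factorial_pos
    have hqine : (0:ℝ) < q ^ i := pow_pos hq0 i
    rw [hdfc]
    field_simp
  have ha' := hconv cV hcV a s ha
  have hb' := hconv cW hcW b t hb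
  have hmain := conv_main q hq s t cV cW hcV hcW a b ha0 hb0 ha' hb' (ratio_lim s t)
  have hdf := df_lim 1 (s+t+1)
  have h2 := hmain.mul hdf
  rw [mul_one] at h2
  refine h2.congr' ?_
  filter_upwards [eventually_ge_atTop (s+t+1)] with M hM
  have hM1 : 1 ≤ M := by omega
  have hM0 : (0:ℝ) < (M:ℝ) := by exact_mod_cast hM1
  have hdfc : (((M+1).descFactorial (s+t+1) : ℕ) : ℝ)
      = (((s+t+1).factorial : ℕ) : ℝ) * (((M+1).choose (s+t+1) : ℕ) : ℝ) := by
    rw [← Nat.cast_mul, Nat.descFactorial_eq_factorial_mul_choose]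
  have hch : (0:ℝ) < (((M+1).choose (s+t+1) : ℕ) : ℝ) := by
    exact_mod_cast Nat.choose_pos (by omega)
  have hfa : (0:ℝ) < (((s+t+1).factorial : ℕ) : ℝ) := by
    exact_mod_cast (s+t+1).factorial_pos
  have hsf : (0:ℝ) < ((s.factorial : ℕ) : ℝ) := by exact_mod_cast s.factorial_pos
  have htf : (0:ℝ) < ((t.factorial : ℕ) : ℝ) := by exact_mod_cast t.factorial_pos
  have hqM : (0:ℝ) < q ^ M := pow_pos hq0 M
  rw [hdfc]
  field_simp
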